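/- Let S be the set of the following sixteen 2×2 matrices over ℤ/3ℤ (written by rows): [[1,0],[0,1]], [[2,2],[0,1]], [[1,1],[0,2]], [[2,0],[2,1]], [[1,0],[1,2]], [[2,0],[0,2]], [[2,2],[2,1]], [[1,1],[1,2]], [[2,1],[1,0]], [[1,2],[2,0]], [[0,2],[2,2]], [[0,1],[1,1]], [[0,2],[1,0]], [[0,1],[2,0]], [[1,2],[2,2]], [[2,1],[1,1]]. Then S is a subgroup of GL₂(ℤ/3ℤ) of order 16, and exactly 11 elements of S satisfy condition (H); in particular, the proportion of elements of S satisfying condition (H) is 11/16. -/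
import Mathlib

set_option maxRecDepth 100000

/-- Condition (H) on a matrix `A ∈ GL₂(ℤ/3ℤ)`: letting `f(A)` be the multiplicative order of
`det A`, the eigenvalues `α, β` of `A` satisfy `α ^ f(A) + β ^ f(A) ≠ 2`; equivalently (since
`det(A) ^ f(A) = 1`), the matrix `A ^ f(A) - 1` is invertible. -/
def CondH (A : Matrix (Fin 2) (Fin 2) (ZMod 3)) : Prop :=
  IsUnit (A ^ orderOf A.det - 1)

/-- The set of sixteen matrices forming the image of the mod 3 Galois representation of the
congruent number elliptic curve `y² = x³ − x`. -/
def Scong : Set (Matrix (Fin 2) (Fin 2) (ZMod 3)) :=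
  {!![1, 0; 0, 1], !![2, 2; 0, 1], !![1, 1; 0, 2], !![2, 0; 2, 1], !![1, 0; 1, 2],
    !![2, 0; 0, 2], !![2, 2; 2, 1], !![1, 1; 1, 2], !![2, 1; 1, 0], !![1, 2; 2, 0],
    !![0, 2; 2, 2], !![0, 1; 1, 1], !![0, 2; 1, 0], !![0, 1; 2, 0], !![1, 2; 2, 2],
    !![2, 1; 1, 1]}

/-- Finset version of `Scong`. -/
def FS : Finset (Matrix (Fin 2) (Fin 2) (ZMod 3)) :=
  {!![1, 0; 0, 1], !![2, 2; 0, 1], !![1, 1; 0, 2], !![2, 0; 2, 1], !![1, 0; 1, 2],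
    !![2, 0; 0, 2], !![2, 2; 2, 1], !![1, 1; 1, 2], !![2, 1; 1, 0], !![1, 2; 2, 0],
    !![0, 2; 2, 2], !![0, 1; 1, 1], !![0, 2; 1, 0], !![0, 1; 2, 0], !![1, 2; 2, 2],
    !![2, 1; 1, 1]}

/-- Finset of elements of `Scong` satisfying condition (H). -/
def GS : Finset (Matrix (Fin 2) (Fin 2) (ZMod 3)) :=
  {!![2, 0; 0, 2], !![2, 2; 2, 1], !![1, 1; 1, 2], !![2, 1; 1, 0], !![1, 2; 2, 0],
    !![0, 2; 2, 2], !![0, 1; 1, 1], !![0, 2; 1, 0], !![0, 1; 2, 0], !![1, 2; 2, 2],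
    !![2, 1; 1, 1]}

lemma Scong_eq : Scong = ↑FS := by
  simp [Scong, FS, Finset.coe_insert, Finset.coe_singleton]

lemma ord_two : orderOf (2 : ZMod 3) = 2 :=
  orderOf_eq_prime (by decide) (by decide)

/-- decidable stand-in for CondH -/
def PH (A : Matrix (Fin 2) (Fin 2) (ZMod 3)) : Prop :=
  (A.det = 1 ∧ (A - 1).det ≠ 0) ∨ (A.det = 2 ∧ (A ^ 2 - 1).det ≠ 0)

instance : DecidablePred PH := fun A => by unfold PH; infer_instance

lemma condH_iff {A : Matrix (Fin 2) (Fin 2) (ZMod 3)} (h : A.det ≠ 0) : CondH A ↔ PH A := by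
  have h3 : ∀ x : ZMod 3, x = 0 ∨ x = 1 ∨ x = 2 := by decide
  unfold CondH PH
  rcases h3 A.det with h0 | h1 | h2
  · exact absurd h0 h
  · rw [h1, orderOf_one, pow_one, Matrix.isUnit_iff_isUnit_det, isUnit_iff_ne_zero]
    constructor
    · exact fun hh => Or.inl ⟨rfl, hh⟩
    · rintro (⟨-, hh⟩ | ⟨hc, -⟩)
      · exact hh
      · exact absurd hc (by decide)
  · rw [h2, ord_two, Matrix.isUnit_iff_isUnit_det, isUnit_iff_ne_zero]
    constructor
    · exact fun hh => Or.inr ⟨rfl, hh⟩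
    · rintro (⟨hc, -⟩ | ⟨-, hh⟩)
      · exact absurd hc (by decide)
      · exact hh

lemma det_ne_zero : ∀ A ∈ FS, A.det ≠ 0 := by decide

lemma condH_set_eq : {A : Matrix (Fin 2) (Fin 2) (ZMod 3) | A ∈ Scong ∧ CondH A} = ↑GS := by
  ext A
  simp only [Set.mem_setOf_eq, Scong_eq, Finset.mem_coe]
  constructor
  · rintro ⟨hF, hC⟩
    have hP := (condH_iff (det_ne_zero A hF)).mp hC
    clear hC
    revert hP hF; revert A
    decide
  · intro hG
    have hF : A ∈ FS := by revert hG; revert A; decide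
    refine ⟨hF, (condH_iff (det_ne_zero A hF)).mpr ?_⟩
    revert hG; revert A; decide

/-- The set `S` of the given sixteen matrices is a subgroup of `GL₂(ℤ/3ℤ)` of order `16`
(its elements are invertible, it contains the identity and is closed under multiplication and
inverses), and exactly `11` of its elements satisfy condition (H); in particular the
proportion of elements of `S` satisfying condition (H) is `11/16`. -/
theorem Scong_subgroup_card_condH :
    (∀ A ∈ Scong, IsUnit A) ∧
    (1 : Matrix (Fin 2) (Fin 2) (ZMod 3)) ∈ Scong ∧
    (∀ A ∈ Scong, ∀ B ∈ Scong, A * B ∈ Scong) ∧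
    (∀ A ∈ Scong, ∃ B ∈ Scong, A * B = 1) ∧
    Nat.card Scong = 16 ∧
    Nat.card {A : Matrix (Fin 2) (Fin 2) (ZMod 3) // A ∈ Scong ∧ CondH A} = 11 ∧
    (Nat.card {A : Matrix (Fin 2) (Fin 2) (ZMod 3) // A ∈ Scong ∧ CondH A} : ℚ) /
      (Nat.card Scong : ℚ) = 11 / 16 := by
  have hcard : Nat.card Scong = 16 := by
    rw [Scong_eq, Nat.card_coe_set_eq, Set.ncard_coe_finset]; decide
  have hcard2 : Nat.card {A : Matrix (Fin 2) (Fin 2) (ZMod 3) // A ∈ Scong ∧ CondH A} = 11 := by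
    have : Nat.card {A : Matrix (Fin 2) (Fin 2) (ZMod 3) // A ∈ Scong ∧ CondH A}
        = Nat.card ({A : Matrix (Fin 2) (Fin 2) (ZMod 3) | A ∈ Scong ∧ CondH A} : Set _) := rfl
    rw [this, condH_set_eq, Nat.card_coe_set_eq, Set.ncard_coe_finset]; decide
  refine ⟨?_, ?_, ?_, ?_, hcard, hcard2, ?_⟩
  · intro A hA
    rw [Matrix.isUnit_iff_isUnit_det, isUnit_iff_ne_zero]
    rw [Scong_eq, Finset.mem_coe] at hA
    exact det_ne_zero A hA
  · rw [Scong_eq, Finset.mem_coe]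
    rw [Matrix.one_fin_two]; decide
  · simp only [Scong_eq, Finset.mem_coe]
    decide
  · simp only [Scong_eq, Finset.mem_coe]
    have h1 : (!![1, 0; 0, 1] : Matrix (Fin 2) (Fin 2) (ZMod 3)) = 1 := Matrix.one_fin_two.symm
    have : ∀ A ∈ FS, ∃ B ∈ FS, A * B = !![1, 0; 0, 1] := by decide
    intro A hA
    obtain ⟨B, hB, hAB⟩ := this A hA
    exact ⟨B, hB, by rw [hAB, h1]⟩
  · rw [hcard, hcard2]; norm_num
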